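/- (Filter step of the evaluation equivalence) Let P be a predicate on values and e a SPARQL expression such that, for every condensed mapping m in the condensed solution sequence s_C, all variables of e lie in the ν-domain of m. If a flat solution sequence s_F represents s_C, then the subsequence of s_F consisting of the flat mappings f with P(eval(e, f)) represents the subsequence of s_C consisting of the condensed mappings m with P(eval(e, m^ν)). -/

import Mathlib

/-- A binding of a variable in a condensed solution mapping: it is bound either
in the value component (`nu`, to a term), the identifier component (`iota`, to a
term identifier), the condensed component (`zeta`, to a pair of a graph-name
identifier and a set of versions), or the unbound-graph component (`psi`).
A condensed solution mapping `Var → Option (Binding Term V)` is thereby exactly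
a quadruple of partial functions with pairwise disjoint domains. -/
inductive Binding (Term V : Type*) where
  | nu (t : Term)
  | iota (n : ℕ)
  | zeta (n : ℕ) (Vs : Set V)
  | psi

/-- The value set of a binding: a singleton `{t}` for a ν-binding, the singleton
`{idtoval n}` for an ι-binding, the set of versioned IRIs `vis (v, idtoval n)`
for `v` in the version set for a ζ-binding, and the set of all versioned IRIs
`vis (v, g)` with `g ∈ NG` for a ψ-binding. -/
def bvals {Term V : Type*} (idtoval : ℕ → Term) (vis : V × Term → Term)
    (NG : Set Term) : Binding Term V → Set Term
  | .nu t => {t}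
  | .iota n => {idtoval n}
  | .zeta n Vs => {t | ∃ v ∈ Vs, t = vis (v, idtoval n)}
  | .psi => {t | ∃ v, ∃ g ∈ NG, t = vis (v, g)}

/-- The value set `vals_m(x)` of a variable under a condensed solution mapping. -/
def valsM {Var Term V : Type*} (idtoval : ℕ → Term) (vis : V × Term → Term)
    (NG : Set Term) (m : Var → Option (Binding Term V)) (x : Var) : Set Term :=
  match m x with
  | none => ∅
  | some b => bvals idtoval vis NG b

/-- The domain of a (condensed or flat) partial mapping. -/
def domM {Var β : Type*} (m : Var → Option β) : Set Var := {x | m x ≠ none}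

/-- The flat expansion `Ξ(m)` of a condensed solution mapping `m`: the set of
partial functions `f : Var ⇀ Term` with the same domain as `m` and with
`f x ∈ vals_m(x)` for every `x` in that domain. -/
def Xi {Var Term V : Type*} (idtoval : ℕ → Term) (vis : V × Term → Term)
    (NG : Set Term) (m : Var → Option (Binding Term V)) :
    Set (Var → Option Term) :=
  {f | (∀ x, m x = none → f x = none) ∧
       (∀ x b, m x = some b → ∃ t, f x = some t ∧ t ∈ bvals idtoval vis NG b)}

/-- Two flat mappings are flat-compatible if they agree on every variable in
the intersection of their domains. -/
def FlatCompat {Var Term : Type*} (f₁ f₂ : Var → Option Term) : Prop :=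
  ∀ x t₁ t₂, f₁ x = some t₁ → f₂ x = some t₂ → t₁ = t₂

/-- Two condensed solution mappings are condensed-compatible if: their ν-components
agree on shared ν-variables, their ι-components agree on shared ι-variables, and
on shared ζ-variables the graph-name identifiers coincide and the version sets
intersect. -/
def CondCompat {Var Term V : Type*} (m₁ m₂ : Var → Option (Binding Term V)) : Prop :=
  (∀ x t₁ t₂, m₁ x = some (.nu t₁) → m₂ x = some (.nu t₂) → t₁ = t₂) ∧
  (∀ x n₁ n₂, m₁ x = some (.iota n₁) → m₂ x = some (.iota n₂) → n₁ = n₂) ∧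
  (∀ x n₁ V₁ n₂ V₂, m₁ x = some (.zeta n₁ V₁) → m₂ x = some (.zeta n₂ V₂) →
    n₁ = n₂ ∧ (V₁ ∩ V₂).Nonempty)

/-- Two bindings are in the same representation component. -/
def SameRep {Term V : Type*} : Binding Term V → Binding Term V → Prop
  | .nu _, .nu _ => True
  | .iota _, .iota _ => True
  | .zeta _ _, .zeta _ _ => True
  | .psi, .psi => True
  | _, _ => False

open Classical in
/-- A flat solution sequence `sF` represents a condensed solution sequence `sC`
if the multiset of flat mappings in `sF` equals the sum over the condensed
mappings `m` in `sC` (with multiplicity) of the multisets underlying `Ξ(m)`;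
equivalently, every flat mapping `f` occurs in `sF` exactly as many times as
there are mappings `m` in `sC` with `f ∈ Ξ(m)`. -/
def Represents {Var Term V : Type*} (idtoval : ℕ → Term) (vis : V × Term → Term)
    (NG : Set Term) (sF : List (Var → Option Term))
    (sC : List (Var → Option (Binding Term V))) : Prop :=
  ∀ f : Var → Option Term,
    (sF : Multiset (Var → Option Term)).count f =
      (sC.map (fun m => if f ∈ Xi idtoval vis NG m then 1 else 0)).sum

/-- SPARQL expressions: terms, variables, and applications of filter-function
symbols (drawn from a type `G`) to lists of expressions. -/
inductive SExpr (Var Term G : Type*) where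
  | term (t : Term)
  | var (x : Var)
  | app (g : G) (args : List (SExpr Var Term G))

/-- Evaluation of a SPARQL expression on a partial mapping `f : Var ⇀ Term`:
a term evaluates to its interpretation, a variable to the interpretation of the
term it is bound to (or `nullV` if unbound), and a filter function `g` to
`interpF g` applied to the values of its arguments. -/
def evalOnTerms {Var Term G Value : Type*} (interpT : Term → Value)
    (interpF : G → List Value → Value) (nullV : Value)
    (f : Var → Option Term) : SExpr Var Term G → Value
  | .term t => interpT t
  | .var x =>
      match f x with
      | some t => interpT t
      | none => nullV
  | .app g args =>
      interpF g (args.attach.map fun e => evalOnTerms interpT interpF nullV f e.1)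
termination_by e => sizeOf e
decreasing_by
  simp only [SExpr.app.sizeOf_spec]
  have := List.sizeOf_lt_of_mem e.2
  omega

/-- The variable `x` occurs in the given SPARQL expression. -/
inductive MemVars {Var Term G : Type*} (x : Var) : SExpr Var Term G → Prop where
  | var : MemVars x (.var x)
  | app {g : G} {args : List (SExpr Var Term G)} {e : SExpr Var Term G} :
      e ∈ args → MemVars x e → MemVars x (.app g args)

/-- The ν-component of a condensed solution mapping, regarded as a partial
function from variables to terms. -/
def nuPart {Var Term V : Type*} (m : Var → Option (Binding Term V)) :
    Var → Option Term :=
  fun x =>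
    match m x with
    | some (.nu t) => some t
    | _ => none

theorem eval_congr {Var Term G Value : Type*} (interpT : Term → Value)
    (interpF : G → List Value → Value) (nullV : Value)
    (f f' : Var → Option Term) :
    ∀ e : SExpr Var Term G, (∀ x, MemVars x e → f x = f' x) →
      evalOnTerms interpT interpF nullV f e =
        evalOnTerms interpT interpF nullV f' e := by
  intro e
  induction e using evalOnTerms.induct
      (f := f) with
  | case1 t => intro _; simp [evalOnTerms]
  | case2 x t ht => intro h; simp [evalOnTerms, h x .var]
  | case3 x hx => intro h; simp [evalOnTerms, h x .var]
  | case4 g args ih =>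
      intro h
      simp only [evalOnTerms]
      congr 1
      refine List.map_congr_left ?_
      rintro ⟨a, ha⟩ _
      exact ih ⟨a, ha⟩ (fun x hx => h x (.app ha hx))

theorem count_coe_filter {α : Type*} [DecidableEq α] (l : List α) (p : α → Bool)
    (a : α) :
    Multiset.count a ↑(l.filter p) = if p a then Multiset.count a ↑l else 0 := by
  induction l with
  | nil => simp
  | cons b l ih =>
      by_cases hb : p b
      · rcases eq_or_ne a b with rfl | hab
        · simp [List.filter_cons, hb, ih]
        · simpa [List.filter_cons, hb, Multiset.count_cons_of_ne hab,
            Multiset.coe_count, List.count_cons_of_ne hab.symm] using ih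
      · rcases eq_or_ne a b with rfl | hab
        · simp [List.filter_cons, hb, ih]
        · simp [List.filter_cons, hb, ih, Multiset.count_cons_of_ne hab,
            Multiset.coe_count, List.count_cons_of_ne hab.symm]

theorem sum_map_filter {α : Type*} (l : List α) (q : α → Bool) (g : α → ℕ) :
    ((l.filter q).map g).sum = (l.map fun a => if q a then g a else 0).sum := by
  induction l with
  | nil => simp
  | cons a l ih =>
      by_cases hq : q a <;> simp [List.filter_cons, hq, ih]

/-- Filter step of the evaluation equivalence: let `P` be a predicate on values
and `e` a SPARQL expression all of whose variables lie in the ν-domain of every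
condensed mapping occurring in `sC`. If the flat solution sequence `sF`
represents `sC`, then the subsequence of `sF` of flat mappings `f` with
`P (eval e f)` represents the subsequence of `sC` of condensed mappings `m`
with `P (eval e m^ν)`. -/
theorem represents_filter {Var Term V G Value : Type*}
    (idtoval : ℕ → Term) (vis : V × Term → Term) (NG : Set Term)
    (hid : Function.Injective idtoval) (hvis : Function.Injective vis)
    (hfin : ∀ b : Binding Term V, (bvals idtoval vis NG b).Finite)
    (interpT : Term → Value) (interpF : G → List Value → Value) (nullV : Value)
    (P : Value → Prop) [DecidablePred P] (e : SExpr Var Term G)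
    (sF : List (Var → Option Term))
    (sC : List (Var → Option (Binding Term V)))
    (hvars : ∀ m ∈ sC, ∀ x : Var, MemVars x e → ∃ t : Term, m x = some (.nu t))
    (hrep : Represents idtoval vis NG sF sC) :
    Represents idtoval vis NG
      (sF.filter fun f => decide (P (evalOnTerms interpT interpF nullV f e)))
      (sC.filter fun m =>
        decide (P (evalOnTerms interpT interpF nullV (nuPart m) e))) := by
  classical
  intro f
  -- key: if f ∈ Xi m and m ∈ sC then eval on f equals eval on nuPart m
  have key : ∀ m ∈ sC, f ∈ Xi idtoval vis NG m →
      evalOnTerms interpT interpF nullV f e =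
        evalOnTerms interpT interpF nullV (nuPart m) e := by
    intro m hm hf
    refine eval_congr interpT interpF nullV f (nuPart m) e ?_
    intro x hx
    obtain ⟨t, ht⟩ := hvars m hm x hx
    obtain ⟨t', ht', hmem⟩ := hf.2 x _ ht
    simp only [bvals, Set.mem_singleton_iff] at hmem
    subst hmem
    simp [ht', nuPart, ht]
  rw [count_coe_filter, sum_map_filter]
  by_cases hP : P (evalOnTerms interpT interpF nullV f e)
  · rw [if_pos (by simpa using hP), hrep f]
    refine congrArg List.sum (List.map_congr_left ?_)
    intro m hm
    by_cases hf : f ∈ Xi idtoval vis NG m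
    · rw [key m hm hf] at hP
      simp [hP, hf]
    · simp [hf]
  · rw [if_neg (by simpa using hP)]
    symm
    refine List.sum_eq_zero ?_
    intro n hn
    obtain ⟨m, hm, rfl⟩ := List.mem_map.mp hn
    by_cases hf : f ∈ Xi idtoval vis NG m
    · rw [key m hm hf] at hP
      simp [hP, hf]
    · simp [hf]
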